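/- For the Q2R rule in one dimension defined by s̲_{i,t+1} = s_{i,t} and s_{j,t+1} = s_{j-1,t} + s̲_{j,t} + s_{j+1,t} (mod 2), the state at time t > 0 satisfies s̲_{i,t} = Σ_{i' ∈ [i-(t-1), i+(t-1)]} ξ_{i'} (mod 2) and s_{j,t} = Σ_{j' ∈ [j-t, j+t]} ξ_{j'} (mod 2), where ξ denotes the initial spin configuration. -/

import Mathlib

/-- For the one-dimensional Q2R rule `s̲_{i,t+1} = s_{i,t}`,
`s_{j,t+1} = s_{j-1,t} + s̲_{j,t} + s_{j+1,t} (mod 2)`, the state at time `t > 0` satisfies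
`s̲_{i,t} = ∑_{i' ∈ [i-(t-1), i+(t-1)]} ξ_{i'}` and `s_{j,t} = ∑_{j' ∈ [j-t, j+t]} ξ_{j'}`
(mod 2), where `ξ` is the initial spin configuration. -/
theorem stmt_4 (ξ : ℤ → ZMod 2) (u q : ℕ → ℤ → ZMod 2)
    (h0u : ∀ i, u 0 i = ξ i) (h0q : ∀ i, q 0 i = ξ i)
    (hu : ∀ t i, u (t + 1) i = q t i)
    (hq : ∀ t j, q (t + 1) j = q t (j - 1) + u t j + q t (j + 1)) :
    ∀ t : ℕ, 0 < t →
      (∀ i : ℤ, u t i = ∑ i' ∈ Finset.Icc (i - ((t : ℤ) - 1)) (i + ((t : ℤ) - 1)), ξ i') ∧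
      (∀ j : ℤ, q t j = ∑ j' ∈ Finset.Icc (j - (t : ℤ)) (j + (t : ℤ)), ξ j') := by
  have hIcc : ∀ a b : ℤ, Finset.Icc a b = Finset.Ico a (b + 1) := by
    intro a b; ext x; simp [Int.lt_add_one_iff]
  have hsplit : ∀ a b c : ℤ, a ≤ b → b ≤ c →
      (∑ x ∈ Finset.Ico a b, ξ x) + ∑ x ∈ Finset.Ico b c, ξ x = ∑ x ∈ Finset.Ico a c, ξ x := by
    intro a b c h1 h2
    rw [← Finset.sum_union (Finset.Ico_disjoint_Ico_consecutive a b c),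
      Finset.Ico_union_Ico_eq_Ico h1 h2]
  intro t
  induction t with
  | zero => intro h; exact absurd h (lt_irrefl 0)
  | succ t ih =>
    intro _
    rcases Nat.eq_zero_or_pos t with h | h
    · subst h
      constructor
      · intro i
        rw [hu, h0q]
        norm_num
      · intro j
        rw [hq, h0q, h0q, h0u]
        have hset : Finset.Icc (j - (1:ℤ)) (j + 1) = {j - 1, j, j + 1} := by
          ext x; simp; omega
        push_cast
        rw [hset, Finset.sum_insert (by simp; omega), Finset.sum_insert (by simp),
          Finset.sum_singleton]
        ring
    · obtain ⟨ihu, ihq⟩ := ih h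
      have hn : (1 : ℤ) ≤ (t : ℤ) := by exact_mod_cast h
      set n : ℤ := (t : ℤ) with hndef
      constructor
      · intro i
        rw [hu, ihq]
        congr 1 <;> push_cast <;> rw [hndef] <;> ring
      · intro j
        rw [hq, ihq, ihu, ihq]
        have e1 : (∑ x ∈ Finset.Icc (j - 1 - n) (j - 1 + n), ξ x)
            = (∑ x ∈ Finset.Ico (j - 1 - n) (j - 1 - n + 2), ξ x)
              + ∑ x ∈ Finset.Ico (j - 1 - n + 2) (j + n), ξ x := by
          rw [hsplit _ _ _ (by omega) (by omega), hIcc]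
          congr 1; ring
        have e2 : (∑ x ∈ Finset.Icc (j - (n - 1)) (j + (n - 1)), ξ x)
            = ∑ x ∈ Finset.Ico (j - 1 - n + 2) (j + n), ξ x := by
          rw [hIcc]; congr 1 <;> ring
        have e3 : (∑ x ∈ Finset.Icc (j + 1 - n) (j + 1 + n), ξ x)
            = (∑ x ∈ Finset.Ico (j - 1 - n + 2) (j + n), ξ x)
              + ∑ x ∈ Finset.Ico (j + n) (j + n + 2), ξ x := by
          rw [hsplit _ _ _ (by omega) (by omega), hIcc]
          congr 1 <;> ring
        have e4 : (∑ x ∈ Finset.Icc (j - (n + 1)) (j + (n + 1)), ξ x)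
            = ((∑ x ∈ Finset.Ico (j - 1 - n) (j - 1 - n + 2), ξ x)
              + ∑ x ∈ Finset.Ico (j - 1 - n + 2) (j + n), ξ x)
              + ∑ x ∈ Finset.Ico (j + n) (j + n + 2), ξ x := by
          rw [hsplit _ _ _ (by omega) (by omega), hsplit _ _ _ (by omega) (by omega), hIcc]
          congr 1 <;> ring
        push_cast
        rw [e1, e2, e3, e4]
        have hx : ∀ x : ZMod 2, x + x = 0 := CharTwo.add_self_eq_zero
        set A := ∑ x ∈ Finset.Ico (j - 1 - n) (j - 1 - n + 2), ξ x
        set B := ∑ x ∈ Finset.Ico (j - 1 - n + 2) (j + n), ξ x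
        set C := ∑ x ∈ Finset.Ico (j + n) (j + n + 2), ξ x
        rw [show (A + B) + B + (B + C) = (A + B) + C + (B + B) from by ring, hx, add_zero]
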